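/- Let (H,R) be a finite-dimensional involutory quasitriangular Hopf algebra over a field k which admits a two-sided integral μ ∈ H* and a two-sided cointegral e ∈ H with μ(e) = 1. Then the Drinfeld element u = Σᵢ S(tᵢ)sᵢ satisfies S(u) = u. -/
import Mathlib

open TensorProduct Coalgebra HopfAlgebra LinearMap

section AuxHopf

variable {k H : Type*} [CommSemiring k] [Semiring H] [HopfAlgebra k H]

private lemma antipode_one' : antipode (R := k) (1 : H) = 1 := by
  have h := HopfAlgebra.mul_antipode_rTensor_comul_apply (R := k) (a := (1 : H))
  rw [Bialgebra.comul_one] at h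
  rw [show (1 : H ⊗[k] H) = (1:H) ⊗ₜ[k] (1:H) from Algebra.TensorProduct.one_def] at h
  simpa using h

end AuxHopf

section AuxHopf

variable {k H : Type*} [CommSemiring k] [Semiring H] [HopfAlgebra k H]

/-- For a right-absorbing cointegral `e` : `Δe · (a ⊗ 1) = Δe · (1 ⊗ S a)`. -/
private lemma Cstar (e : H) (he : ∀ x : H, e * x = counit (R := k) x • e) (a : H) :
    comul (R := k) e * (a ⊗ₜ[k] (1:H)) = comul (R := k) e * ((1:H) ⊗ₜ[k] antipode (R := k) a) := by
  have J1 : ∀ (p : H ⊗[k] H) (w : H),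
      (LinearMap.lTensor H (LinearMap.mul' k H ∘ₗ LinearMap.lTensor H (antipode (R:=k))))
        ((TensorProduct.assoc k H H H) (p ⊗ₜ[k] w))
        = p * ((1:H) ⊗ₜ[k] antipode (R:=k) w) := by
    intro p w
    induction p using TensorProduct.induction_on with
    | zero => simp
    | tmul y z => simp [Algebra.TensorProduct.tmul_mul_tmul]
    | add p q hp hq => simp only [TensorProduct.add_tmul, map_add, hp, hq, add_mul]
  have C3 : ∀ Q : H ⊗[k] H,
      comul (R:=k) e *
        ((LinearMap.lTensor H (LinearMap.mul' k H ∘ₗ LinearMap.lTensor H (antipode (R:=k))))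
          ((TensorProduct.assoc k H H H) ((LinearMap.rTensor H (comul (R:=k))) Q)))
      = comul (R:=k) e * ((1:H) ⊗ₜ[k] antipode (R:=k) (LinearMap.mul' k H
          ((LinearMap.rTensor H ((Algebra.linearMap k H) ∘ₗ counit)) Q))) := by
    intro Q
    induction Q using TensorProduct.induction_on with
    | zero => simp
    | tmul y w =>
      rw [LinearMap.rTensor_tmul, J1, ← mul_assoc, ← Bialgebra.comul_mul, he y, map_smul,
        LinearMap.rTensor_tmul, smul_mul_assoc]
      rw [LinearMap.comp_apply, Algebra.linearMap_apply, LinearMap.mul'_apply, ← Algebra.smul_def,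
        map_smul, TensorProduct.tmul_smul, mul_smul_comm]
    | add p q hp hq =>
      simp only [map_add, mul_add, hp, hq, TensorProduct.tmul_add]
  have step2 : (LinearMap.lTensor H (LinearMap.mul' k H ∘ₗ LinearMap.lTensor H (antipode (R:=k)) ∘ₗ comul))
        (comul a)
      = (LinearMap.lTensor H (LinearMap.mul' k H ∘ₗ LinearMap.lTensor H (antipode (R:=k))))
          ((TensorProduct.assoc k H H H) ((LinearMap.rTensor H (comul (R:=k))) (comul a))) := by
    rw [Coalgebra.coassoc_apply]
    rw [show (LinearMap.mul' k H ∘ₗ LinearMap.lTensor H (antipode (R:=k)) ∘ₗ comul)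
        = ((LinearMap.mul' k H ∘ₗ LinearMap.lTensor H (antipode (R:=k))) ∘ₗ comul) from rfl]
    rw [LinearMap.lTensor_comp, LinearMap.comp_apply]
  have expand_right : (a ⊗ₜ[k] (1:H)) =
      (LinearMap.lTensor H (LinearMap.mul' k H ∘ₗ LinearMap.lTensor H (antipode (R:=k)) ∘ₗ comul))
        (comul a) := by
    rw [show (LinearMap.mul' k H ∘ₗ LinearMap.lTensor H (antipode (R:=k)) ∘ₗ comul)
        = ((Algebra.linearMap k H) ∘ₗ counit) from HopfAlgebra.mul_antipode_lTensor_comul]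
    rw [LinearMap.lTensor_comp, LinearMap.comp_apply, Coalgebra.lTensor_counit_comul]
    simp
  have contract : LinearMap.mul' k H
      ((LinearMap.rTensor H ((Algebra.linearMap k H) ∘ₗ counit)) (comul (R := k) a)) = a := by
    rw [LinearMap.rTensor_comp, LinearMap.comp_apply, Coalgebra.rTensor_counit_comul]
    simp
  calc comul (R := k) e * (a ⊗ₜ[k] (1:H))
      = comul (R:=k) e *
        ((LinearMap.lTensor H (LinearMap.mul' k H ∘ₗ LinearMap.lTensor H (antipode (R:=k))))
          ((TensorProduct.assoc k H H H) ((LinearMap.rTensor H (comul (R:=k))) (comul a)))) := by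
        rw [← step2, ← expand_right]
    _ = comul (R := k) e * ((1:H) ⊗ₜ[k] antipode (R := k) a) := by rw [C3, contract]

end AuxHopf

section AuxHopf

variable {k H : Type*} [CommSemiring k] [Semiring H] [HopfAlgebra k H]

/-- For a left-absorbing cointegral `e` : `(1 ⊗ a) · Δe = (S a ⊗ 1) · Δe`. -/
private lemma Cstar' (e : H) (he : ∀ x : H, x * e = counit (R := k) x • e) (a : H) :
    ((1:H) ⊗ₜ[k] a) * comul (R := k) e = ((antipode (R := k) a) ⊗ₜ[k] (1:H)) * comul (R := k) e := by
  have J2 : ∀ (y : H) (p : H ⊗[k] H),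
      (LinearMap.rTensor H (LinearMap.mul' k H ∘ₗ LinearMap.rTensor H (antipode (R:=k))))
        ((TensorProduct.assoc k H H H).symm (y ⊗ₜ[k] p))
        = ((antipode (R:=k) y) ⊗ₜ[k] (1:H)) * p := by
    intro y p
    induction p using TensorProduct.induction_on with
    | zero => simp
    | tmul z w => simp [Algebra.TensorProduct.tmul_mul_tmul]
    | add p q hp hq => simp only [TensorProduct.tmul_add, map_add, hp, hq, mul_add]
  have C3 : ∀ Q : H ⊗[k] H,
      ((LinearMap.rTensor H (LinearMap.mul' k H ∘ₗ LinearMap.rTensor H (antipode (R:=k))))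
          ((TensorProduct.assoc k H H H).symm ((LinearMap.lTensor H (comul (R:=k))) Q)))
        * comul (R:=k) e
      = ((antipode (R:=k) (LinearMap.mul' k H
          ((LinearMap.lTensor H ((Algebra.linearMap k H) ∘ₗ counit)) Q))) ⊗ₜ[k] (1:H))
        * comul (R:=k) e := by
    intro Q
    induction Q using TensorProduct.induction_on with
    | zero => simp
    | tmul y w =>
      rw [LinearMap.lTensor_tmul, J2, mul_assoc, ← Bialgebra.comul_mul, he w, map_smul,
        LinearMap.lTensor_tmul, mul_smul_comm]
      rw [LinearMap.comp_apply, Algebra.linearMap_apply, LinearMap.mul'_apply,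
        ← Algebra.commutes, ← Algebra.smul_def, map_smul, ← TensorProduct.smul_tmul',
        smul_mul_assoc]
    | add p q hp hq =>
      simp only [map_add, add_mul, hp, hq, TensorProduct.add_tmul]
  have step2 : (LinearMap.rTensor H (LinearMap.mul' k H ∘ₗ LinearMap.rTensor H (antipode (R:=k)) ∘ₗ comul))
        (comul a)
      = (LinearMap.rTensor H (LinearMap.mul' k H ∘ₗ LinearMap.rTensor H (antipode (R:=k))))
          ((TensorProduct.assoc k H H H).symm ((LinearMap.lTensor H (comul (R:=k))) (comul a))) := by
    rw [Coalgebra.coassoc_symm_apply]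
    rw [show (LinearMap.mul' k H ∘ₗ LinearMap.rTensor H (antipode (R:=k)) ∘ₗ comul)
        = ((LinearMap.mul' k H ∘ₗ LinearMap.rTensor H (antipode (R:=k))) ∘ₗ comul) from rfl]
    rw [LinearMap.rTensor_comp, LinearMap.comp_apply]
  have expand_left : ((1:H) ⊗ₜ[k] a) =
      (LinearMap.rTensor H (LinearMap.mul' k H ∘ₗ LinearMap.rTensor H (antipode (R:=k)) ∘ₗ comul))
        (comul a) := by
    rw [show (LinearMap.mul' k H ∘ₗ LinearMap.rTensor H (antipode (R:=k)) ∘ₗ comul)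
        = ((Algebra.linearMap k H) ∘ₗ counit) from HopfAlgebra.mul_antipode_rTensor_comul]
    rw [LinearMap.rTensor_comp, LinearMap.comp_apply, Coalgebra.rTensor_counit_comul]
    simp
  have contract : LinearMap.mul' k H
      ((LinearMap.lTensor H ((Algebra.linearMap k H) ∘ₗ counit)) (comul (R := k) a)) = a := by
    rw [LinearMap.lTensor_comp, LinearMap.comp_apply, Coalgebra.lTensor_counit_comul]
    simp
  calc ((1:H) ⊗ₜ[k] a) * comul (R := k) e
      = ((LinearMap.rTensor H (LinearMap.mul' k H ∘ₗ LinearMap.rTensor H (antipode (R:=k))))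
          ((TensorProduct.assoc k H H H).symm ((LinearMap.lTensor H (comul (R:=k))) (comul a))))
        * comul (R:=k) e := by rw [← step2, ← expand_left]
    _ = ((antipode (R := k) a) ⊗ₜ[k] (1:H)) * comul (R := k) e := by rw [C3, contract]

end AuxHopf

section AuxHopf

variable {k H : Type*} [CommSemiring k] [Semiring H] [HopfAlgebra k H]

private lemma M1 (μ : Module.Dual k H) (W : H ⊗[k] H) (c : H) :
    (TensorProduct.lid k H) ((LinearMap.rTensor H μ) (W * ((1:H) ⊗ₜ[k] c)))
      = (TensorProduct.lid k H) ((LinearMap.rTensor H μ) W) * c := by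
  induction W using TensorProduct.induction_on with
  | zero => simp
  | tmul a b => simp [Algebra.TensorProduct.tmul_mul_tmul, smul_mul_assoc]
  | add X Y hX hY => simp only [add_mul, map_add, hX, hY]

private lemma M2 (μ : Module.Dual k H) (W : H ⊗[k] H) (c : H) :
    (TensorProduct.rid k H) ((LinearMap.lTensor H μ) ((c ⊗ₜ[k] (1:H)) * W))
      = c * (TensorProduct.rid k H) ((LinearMap.lTensor H μ) W) := by
  induction W using TensorProduct.induction_on with
  | zero => simp
  | tmul a b => simp [Algebra.TensorProduct.tmul_mul_tmul, mul_smul_comm]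
  | add X Y hX hY => simp only [mul_add, map_add, hX, hY]

private lemma M3 (μ : Module.Dual k H) (W : H ⊗[k] H) (c : H) :
    (TensorProduct.rid k H) ((LinearMap.lTensor H μ) (W * (c ⊗ₜ[k] (1:H))))
      = (TensorProduct.rid k H) ((LinearMap.lTensor H μ) W) * c := by
  induction W using TensorProduct.induction_on with
  | zero => simp
  | tmul a b => simp [Algebra.TensorProduct.tmul_mul_tmul, smul_mul_assoc]
  | add X Y hX hY => simp only [add_mul, map_add, hX, hY]

private lemma M5 (μ : Module.Dual k H) (W : H ⊗[k] H) :
    (TensorProduct.rid k H) ((LinearMap.lTensor H μ) ((TensorProduct.comm k H H) W))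
      = (TensorProduct.lid k H) ((LinearMap.rTensor H μ) W) := by
  induction W using TensorProduct.induction_on with
  | zero => simp
  | tmul a b => simp
  | add X Y hX hY => simp only [map_add, hX, hY]

private lemma M4 (W : H ⊗[k] H) (c : H) :
    ((TensorProduct.comm k H H) W) * ((1:H) ⊗ₜ[k] c)
      = (TensorProduct.comm k H H) (W * (c ⊗ₜ[k] (1:H))) := by
  induction W using TensorProduct.induction_on with
  | zero => simp
  | tmul a b => simp [Algebra.TensorProduct.tmul_mul_tmul]
  | add X Y hX hY => simp only [map_add, add_mul, hX, hY]

end AuxHopf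

section AuxHopf2

variable {k H : Type*} [CommSemiring k] [Semiring H] [HopfAlgebra k H]

private lemma F1 (μ : Module.Dual k H) (e : H)
    (he : ∀ x : H, e * x = counit (R := k) x • e)
    (hμe : (TensorProduct.lid k H) ((LinearMap.rTensor H μ) (comul (R := k) e)) = 1) (x : H) :
    (TensorProduct.lid k H) ((LinearMap.rTensor H μ) (comul (R := k) e * (x ⊗ₜ[k] (1:H))))
      = antipode (R := k) x := by
  rw [Cstar e he x, M1, hμe, one_mul]

private lemma F4 (μ : Module.Dual k H) (e : H)
    (he : ∀ x : H, x * e = counit (R := k) x • e)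
    (hμe : (TensorProduct.rid k H) ((LinearMap.lTensor H μ) (comul (R := k) e)) = 1) (x : H) :
    (TensorProduct.rid k H) ((LinearMap.lTensor H μ) (((1:H) ⊗ₜ[k] x) * comul (R := k) e))
      = antipode (R := k) x := by
  rw [Cstar' e he x, M2, hμe, mul_one]

private lemma lemAH (μ : Module.Dual k H) (e : H)
    (he : ∀ x : H, e * x = counit (R := k) x • e)
    (hμe : (TensorProduct.lid k H) ((LinearMap.rTensor H μ) (comul (R := k) e)) = 1) (a b : H) :
    antipode (R := k) (a * b) = antipode (R := k) b * antipode (R := k) a := by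
  symm
  have key : comul (R := k) e * (b ⊗ₜ[k] (1:H)) * ((1:H) ⊗ₜ[k] antipode (R := k) a)
      = comul (R := k) e * ((a * b) ⊗ₜ[k] (1:H)) := by
    rw [mul_assoc]
    rw [show (b ⊗ₜ[k] (1:H)) * ((1:H) ⊗ₜ[k] antipode (R := k) a)
        = ((1:H) ⊗ₜ[k] antipode (R := k) a) * (b ⊗ₜ[k] (1:H)) by
      simp [Algebra.TensorProduct.tmul_mul_tmul]]
    rw [← mul_assoc, ← Cstar e he a, mul_assoc]
    simp [Algebra.TensorProduct.tmul_mul_tmul]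
  calc antipode (R := k) b * antipode (R := k) a
      = (TensorProduct.lid k H) ((LinearMap.rTensor H μ)
          (comul (R := k) e * (b ⊗ₜ[k] (1:H)))) * antipode (R := k) a := by
        rw [F1 μ e he hμe b]
    _ = (TensorProduct.lid k H) ((LinearMap.rTensor H μ)
          (comul (R := k) e * (b ⊗ₜ[k] (1:H)) * ((1:H) ⊗ₜ[k] antipode (R := k) a))) := by
        rw [M1]
    _ = (TensorProduct.lid k H) ((LinearMap.rTensor H μ)
          (comul (R := k) e * ((a * b) ⊗ₜ[k] (1:H)))) := by rw [key]
    _ = antipode (R := k) (a * b) := F1 μ e he hμe (a*b)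

private lemma lemL1 (μ : Module.Dual k H) (e : H)
    (he : ∀ x : H, e * x = counit (R := k) x • e)
    (hμe : (TensorProduct.lid k H) ((LinearMap.rTensor H μ) (comul (R := k) e)) = 1)
    (hinv : ∀ x : H, antipode (R := k) (antipode (R := k) x) = x) (y : H) :
    LinearMap.mul' k H ((TensorProduct.comm k H H)
      ((LinearMap.rTensor H (antipode (R := k))) (comul (R := k) y)))
      = counit (R := k) y • (1 : H) := by
  have L1' : ∀ W : H ⊗[k] H,
      antipode (R := k) (LinearMap.mul' k H ((TensorProduct.comm k H H)
        ((LinearMap.rTensor H (antipode (R := k))) W)))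
      = LinearMap.mul' k H ((LinearMap.lTensor H (antipode (R := k))) W) := by
    intro W
    induction W using TensorProduct.induction_on with
    | zero => simp
    | tmul a b => simp [lemAH μ e he hμe, hinv]
    | add X Y hX hY => simp only [map_add, hX, hY]
  have h2 := L1' (comul (R := k) y)
  rw [HopfAlgebra.mul_antipode_lTensor_comul_apply] at h2
  have h3 := congrArg (antipode (R := k)) h2
  rw [hinv] at h3
  rw [h3, Algebra.algebraMap_eq_smul_one, map_smul, antipode_one']

end AuxHopf2

section AuxHopf3

variable {k H : Type*} [CommSemiring k] [Semiring H] [HopfAlgebra k H]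

private lemma partI
    (hL1 : ∀ y : H, LinearMap.mul' k H ((TensorProduct.comm k H H)
      ((LinearMap.rTensor H (antipode (R := k))) (comul (R := k) y)))
      = counit (R := k) y • (1 : H))
    (R : H ⊗[k] H)
    (hRunit : IsUnit R)
    (hR2 : LinearMap.rTensor H (Coalgebra.comul (R := k)) R
      = (LinearMap.rTensor H ((TensorProduct.mk k H H).flip 1) R)
        * (LinearMap.rTensor H (TensorProduct.mk k H H 1) R))
    (hR3 : LinearMap.lTensor H (Coalgebra.comul (R := k)) R
      = (LinearMap.lTensor H (TensorProduct.mk k H H 1) R)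
        * (LinearMap.lTensor H ((TensorProduct.mk k H H).flip 1) R)) :
    LinearMap.rTensor H (antipode (R := k)) R = LinearMap.lTensor H (antipode (R := k)) R := by
  obtain ⟨v, hv⟩ := hRunit
  -- the algebra morphism contracting the first tensor factor with the counit
  set E1 : (H ⊗[k] H) →ₐ[k] H :=
    ((Algebra.TensorProduct.lid k H).toAlgHom.comp
      (Algebra.TensorProduct.map (Bialgebra.counitAlgHom k H) (AlgHom.id k H))) with hE1def
  have hE1 : ∀ (x y : H), E1 (x ⊗ₜ[k] y) = counit (R := k) x • y := by
    intro x y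
    simp [hE1def, Algebra.TensorProduct.lid_tmul]
  have hE1lin : ∀ p : H ⊗[k] H,
      E1 p = (TensorProduct.lid k H) ((LinearMap.rTensor H (counit (R := k))) p) := by
    intro p
    induction p using TensorProduct.induction_on with
    | zero => simp
    | tmul x y => rw [hE1]; simp
    | add p q hp hq => simp only [map_add, hp, hq]
  have hE1Δ : ∀ a : H, E1 (comul (R := k) a) = a := by
    intro a
    rw [hE1lin, Coalgebra.rTensor_counit_comul]
    simp
  -- the algebra morphism contracting the second tensor factor with the counit
  set E2 : (H ⊗[k] H) →ₐ[k] H := E1.comp (Algebra.TensorProduct.comm k H H).toAlgHom with hE2def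
  have hE2 : ∀ (x y : H), E2 (x ⊗ₜ[k] y) = counit (R := k) y • x := by
    intro x y
    simp [hE2def, hE1]
  have hE2lin : ∀ p : H ⊗[k] H,
      E2 p = (TensorProduct.rid k H) ((LinearMap.lTensor H (counit (R := k))) p) := by
    intro p
    induction p using TensorProduct.induction_on with
    | zero => simp
    | tmul x y => rw [hE2]; simp
    | add p q hp hq => simp only [map_add, hp, hq]
  have hE2Δ : ∀ a : H, E2 (comul (R := k) a) = a := by
    intro a
    rw [hE2lin, Coalgebra.lTensor_counit_comul]
    simp
  -- c₁ = 1
  set c1 : H := (TensorProduct.lid k H) ((LinearMap.rTensor H (counit (R := k))) R) with hc1def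
  set Φ : ((H ⊗[k] H) ⊗[k] H) →ₐ[k] (H ⊗[k] H) :=
    Algebra.TensorProduct.map E1 (AlgHom.id k H) with hΦdef
  have hI1 : ∀ X : H ⊗[k] H, Φ ((LinearMap.rTensor H (comul (R := k))) X) = X := by
    intro X
    induction X using TensorProduct.induction_on with
    | zero => simp
    | tmul a c => simp [hΦdef, hE1Δ]
    | add p q hp hq => simp only [map_add, hp, hq]
  have hI2 : ∀ X : H ⊗[k] H, Φ ((LinearMap.rTensor H ((TensorProduct.mk k H H).flip 1)) X)
      = (1 : H) ⊗ₜ[k] ((TensorProduct.lid k H) ((LinearMap.rTensor H (counit (R := k))) X)) := by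
    intro X
    induction X using TensorProduct.induction_on with
    | zero => simp
    | tmul a c =>
      simp only [LinearMap.rTensor_tmul, TensorProduct.mk_apply, LinearMap.flip_apply,
        hΦdef, Algebra.TensorProduct.map_tmul, AlgHom.coe_id, id_eq, hE1,
        TensorProduct.lid_tmul]
      rw [TensorProduct.smul_tmul]
    | add p q hp hq => simp only [map_add, hp, hq, TensorProduct.tmul_add]
  have hI3 : ∀ X : H ⊗[k] H, Φ ((LinearMap.rTensor H (TensorProduct.mk k H H 1)) X) = X := by
    intro X
    induction X using TensorProduct.induction_on with
    | zero => simp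
    | tmul a c => simp [hΦdef, hE1]
    | add p q hp hq => simp only [map_add, hp, hq]
  have hc1 : (1 : H) ⊗ₜ[k] c1 = (1 : H ⊗[k] H) := by
    have h := congrArg Φ hR2
    rw [map_mul, hI2, hI3, hI1] at h
    calc (1 : H) ⊗ₜ[k] c1 = ((1 : H) ⊗ₜ[k] c1) * (↑v * ↑v⁻¹) := by
          rw [Units.mul_inv, mul_one]
      _ = (((1 : H) ⊗ₜ[k] c1) * R) * ↑v⁻¹ := by rw [hv, mul_assoc]
      _ = R * ↑v⁻¹ := by rw [← h]
      _ = 1 := by rw [← hv, Units.mul_inv]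
  -- c₂ = 1
  set c2 : H := (TensorProduct.rid k H) ((LinearMap.lTensor H (counit (R := k))) R) with hc2def
  set Φ' : (H ⊗[k] (H ⊗[k] H)) →ₐ[k] (H ⊗[k] H) :=
    Algebra.TensorProduct.map (AlgHom.id k H) E2 with hΦ'def
  have hI1' : ∀ X : H ⊗[k] H, Φ' ((LinearMap.lTensor H (comul (R := k))) X) = X := by
    intro X
    induction X using TensorProduct.induction_on with
    | zero => simp
    | tmul a c => simp [hΦ'def, hE2Δ]
    | add p q hp hq => simp only [map_add, hp, hq]
  have hI2' : ∀ X : H ⊗[k] H, Φ' ((LinearMap.lTensor H (TensorProduct.mk k H H 1)) X)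
      = ((TensorProduct.rid k H) ((LinearMap.lTensor H (counit (R := k))) X)) ⊗ₜ[k] (1 : H) := by
    intro X
    induction X using TensorProduct.induction_on with
    | zero => simp
    | tmul a c =>
      simp only [LinearMap.lTensor_tmul, TensorProduct.mk_apply,
        hΦ'def, Algebra.TensorProduct.map_tmul, AlgHom.coe_id, id_eq, hE2,
        TensorProduct.rid_tmul]
      rw [TensorProduct.tmul_smul, TensorProduct.smul_tmul']
    | add p q hp hq => simp only [map_add, hp, hq, TensorProduct.add_tmul]
  have hI3' : ∀ X : H ⊗[k] H,
      Φ' ((LinearMap.lTensor H ((TensorProduct.mk k H H).flip 1)) X) = X := by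
    intro X
    induction X using TensorProduct.induction_on with
    | zero => simp
    | tmul a c => simp [hΦ'def, hE2]
    | add p q hp hq => simp only [map_add, hp, hq]
  have hc2 : c2 ⊗ₜ[k] (1 : H) = (1 : H ⊗[k] H) := by
    have h := congrArg Φ' hR3
    rw [map_mul, hI2', hI3', hI1'] at h
    calc c2 ⊗ₜ[k] (1 : H) = (c2 ⊗ₜ[k] (1 : H)) * (↑v * ↑v⁻¹) := by
          rw [Units.mul_inv, mul_one]
      _ = ((c2 ⊗ₜ[k] (1 : H)) * R) * ↑v⁻¹ := by rw [hv, mul_assoc]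
      _ = R * ↑v⁻¹ := by rw [← h]
      _ = 1 := by rw [← hv, Units.mul_inv]
  -- left inverse : (S ⊗ id) R * R = 1
  set Ψ : ((H ⊗[k] H) ⊗[k] H) →ₗ[k] (H ⊗[k] H) :=
    LinearMap.rTensor H (LinearMap.mul' k H ∘ₗ LinearMap.rTensor H (antipode (R := k)))
    with hΨdef
  have hP1 : ∀ X : H ⊗[k] H, Ψ ((LinearMap.rTensor H (comul (R := k))) X)
      = (1 : H) ⊗ₜ[k] ((TensorProduct.lid k H) ((LinearMap.rTensor H (counit (R := k))) X)) := by
    intro X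
    induction X using TensorProduct.induction_on with
    | zero => simp
    | tmul a c =>
      simp only [LinearMap.rTensor_tmul, hΨdef, LinearMap.comp_apply,
        HopfAlgebra.mul_antipode_rTensor_comul_apply, TensorProduct.lid_tmul,
        Algebra.algebraMap_eq_smul_one]
      rw [TensorProduct.smul_tmul]
    | add p q hp hq => simp only [map_add, hp, hq, TensorProduct.tmul_add]
  have hP2 : ∀ X Y : H ⊗[k] H,
      Ψ (((LinearMap.rTensor H ((TensorProduct.mk k H H).flip 1)) X)
        * ((LinearMap.rTensor H (TensorProduct.mk k H H 1)) Y))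
      = ((LinearMap.rTensor H (antipode (R := k))) X) * Y := by
    intro X Y
    induction X using TensorProduct.induction_on with
    | zero => simp
    | tmul a c =>
      induction Y using TensorProduct.induction_on with
      | zero => simp
      | tmul b d =>
        simp [hΨdef, Algebra.TensorProduct.tmul_mul_tmul]
      | add Y1 Y2 h1 h2 => simp only [map_add, mul_add, h1, h2]
    | add X1 X2 h1 h2 => simp only [map_add, add_mul, h1, h2]
  have left_inv : ((LinearMap.rTensor H (antipode (R := k))) R) * R = 1 := by
    rw [← hP2, ← hR2, hP1, ← hc1def, hc1]
  -- right inverse : R * (id ⊗ S) R = 1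
  set Ψ' : (H ⊗[k] (H ⊗[k] H)) →ₗ[k] (H ⊗[k] H) :=
    LinearMap.lTensor H (LinearMap.mul' k H ∘ₗ (TensorProduct.comm k H H).toLinearMap
      ∘ₗ LinearMap.rTensor H (antipode (R := k))) with hΨ'def
  have hQ1 : ∀ X : H ⊗[k] H, Ψ' ((LinearMap.lTensor H (comul (R := k))) X)
      = ((TensorProduct.rid k H) ((LinearMap.lTensor H (counit (R := k))) X)) ⊗ₜ[k] (1 : H) := by
    intro X
    induction X using TensorProduct.induction_on with
    | zero => simp
    | tmul a c =>
      simp only [LinearMap.lTensor_tmul, hΨ'def, LinearMap.comp_apply,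
        LinearEquiv.coe_coe, hL1, TensorProduct.rid_tmul]
      rw [TensorProduct.tmul_smul, TensorProduct.smul_tmul']
    | add p q hp hq => simp only [map_add, hp, hq, TensorProduct.add_tmul]
  have hQ2 : ∀ X Y : H ⊗[k] H,
      Ψ' (((LinearMap.lTensor H (TensorProduct.mk k H H 1)) X)
        * ((LinearMap.lTensor H ((TensorProduct.mk k H H).flip 1)) Y))
      = X * ((LinearMap.lTensor H (antipode (R := k))) Y) := by
    intro X Y
    induction X using TensorProduct.induction_on with
    | zero => simp
    | tmul a c =>
      induction Y using TensorProduct.induction_on with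
      | zero => simp
      | tmul b d =>
        simp [hΨ'def, Algebra.TensorProduct.tmul_mul_tmul]
      | add Y1 Y2 h1 h2 => simp only [map_add, mul_add, h1, h2]
    | add X1 X2 h1 h2 => simp only [map_add, add_mul, h1, h2]
  have right_inv : R * ((LinearMap.lTensor H (antipode (R := k))) R) = 1 := by
    rw [← hQ2, ← hR3, hQ1, ← hc2def, hc2]
  calc LinearMap.rTensor H (antipode (R := k)) R
      = (LinearMap.rTensor H (antipode (R := k)) R)
        * (R * (LinearMap.lTensor H (antipode (R := k)) R)) := by rw [right_inv, mul_one]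
    _ = ((LinearMap.rTensor H (antipode (R := k)) R) * R)
        * (LinearMap.lTensor H (antipode (R := k)) R) := by rw [mul_assoc]
    _ = LinearMap.lTensor H (antipode (R := k)) R := by rw [left_inv, one_mul]

end AuxHopf3

/-- Let `(H,R)` be a finite-dimensional involutory quasitriangular Hopf algebra
over a field `k` which admits a two-sided integral `μ ∈ H*` and a two-sided cointegral `e ∈ H`
with `μ(e) = 1`.  Then the Drinfeld element `u = Σᵢ S(tᵢ)·sᵢ` satisfies `S(u) = u`. -/
theorem drinfeld_element_antipode_fixed
    {k H : Type*} [Field k] [Ring H] [HopfAlgebra k H] [FiniteDimensional k H]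
    -- involutory
    (hinv : ∀ x : H, antipode (R := k) (antipode (R := k) x) = x)
    -- quasitriangular structure R
    (R : H ⊗[k] H)
    (hRunit : IsUnit R)
    (hR1 : ∀ x : H,
      (TensorProduct.comm k H H (comul (R := k) x)) * R = R * comul (R := k) x)
    (hR2 : LinearMap.rTensor H (Coalgebra.comul (R := k)) R
      = (LinearMap.rTensor H ((TensorProduct.mk k H H).flip 1) R)
        * (LinearMap.rTensor H (TensorProduct.mk k H H 1) R))
    (hR3 : LinearMap.lTensor H (Coalgebra.comul (R := k)) R
      = (LinearMap.lTensor H (TensorProduct.mk k H H 1) R)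
        * (LinearMap.lTensor H ((TensorProduct.mk k H H).flip 1) R))
    -- two-sided integral and cointegral
    (μ : Module.Dual k H) (e : H)
    (hμ : ∀ x : H,
      TensorProduct.rid k H (LinearMap.lTensor H μ (comul (R := k) x)) = μ x • (1 : H) ∧
      TensorProduct.lid k H (LinearMap.rTensor H μ (comul (R := k) x)) = μ x • (1 : H))
    (he : ∀ x : H, x * e = counit (R := k) x • e ∧ e * x = counit (R := k) x • e)
    (hμe : μ e = 1)
    -- Drinfeld element u = Σᵢ S(tᵢ)·sᵢ
    (u : H)
    (hu : u = LinearMap.mul' k H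
      (TensorProduct.comm k H H (LinearMap.lTensor H (antipode (R := k)) R))) :
    antipode (R := k) u = u := by
  have heL : ∀ x : H, e * x = counit (R := k) x • e := fun x => (he x).2
  have heR : ∀ x : H, x * e = counit (R := k) x • e := fun x => (he x).1
  have hμeL : (TensorProduct.lid k H) ((LinearMap.rTensor H μ) (comul (R := k) e)) = 1 := by
    rw [(hμ e).2, hμe, one_smul]
  have hμeR : (TensorProduct.rid k H) ((LinearMap.lTensor H μ) (comul (R := k) e)) = 1 := by
    rw [(hμ e).1, hμe, one_smul]
  have hPI := partI (lemL1 μ e heL hμeL hinv) R hRunit hR2 hR3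
  -- contraction identities against the integral
  have G1 : ∀ X : H ⊗[k] H,
      (TensorProduct.rid k H) ((LinearMap.lTensor H μ) (X * comul (R := k) e))
      = LinearMap.mul' k H ((LinearMap.lTensor H (antipode (R := k))) X) := by
    intro X
    induction X using TensorProduct.induction_on with
    | zero => simp
    | tmul s t =>
      calc (TensorProduct.rid k H) ((LinearMap.lTensor H μ) ((s ⊗ₜ[k] t) * comul (R := k) e))
          = (TensorProduct.rid k H) ((LinearMap.lTensor H μ)
              ((s ⊗ₜ[k] (1:H)) * (((1:H) ⊗ₜ[k] t) * comul (R := k) e))) := by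
            rw [← mul_assoc]
            congr 2
            simp [Algebra.TensorProduct.tmul_mul_tmul]
        _ = s * (TensorProduct.rid k H) ((LinearMap.lTensor H μ)
              (((1:H) ⊗ₜ[k] t) * comul (R := k) e)) := M2 μ _ s
        _ = s * antipode (R := k) t := by rw [F4 μ e heR hμeR t]
        _ = LinearMap.mul' k H ((LinearMap.lTensor H (antipode (R := k))) (s ⊗ₜ[k] t)) := by
            simp
    | add X Y hX hY => simp only [add_mul, map_add, hX, hY]
  have G2 : ∀ X : H ⊗[k] H,
      (TensorProduct.rid k H) ((LinearMap.lTensor H μ)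
        ((TensorProduct.comm k H H (comul (R := k) e)) * X))
      = LinearMap.mul' k H ((TensorProduct.comm k H H)
          ((LinearMap.lTensor H (antipode (R := k))) X)) := by
    intro X
    induction X using TensorProduct.induction_on with
    | zero => simp
    | tmul s t =>
      calc (TensorProduct.rid k H) ((LinearMap.lTensor H μ)
            ((TensorProduct.comm k H H (comul (R := k) e)) * (s ⊗ₜ[k] t)))
          = (TensorProduct.rid k H) ((LinearMap.lTensor H μ)
              (((TensorProduct.comm k H H (comul (R := k) e)) * ((1:H) ⊗ₜ[k] t))
                * (s ⊗ₜ[k] (1:H)))) := by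
            rw [mul_assoc]
            congr 3
            simp [Algebra.TensorProduct.tmul_mul_tmul]
        _ = (TensorProduct.rid k H) ((LinearMap.lTensor H μ)
              ((TensorProduct.comm k H H (comul (R := k) e)) * ((1:H) ⊗ₜ[k] t))) * s :=
            M3 μ _ s
        _ = (TensorProduct.lid k H) ((LinearMap.rTensor H μ)
              (comul (R := k) e * (t ⊗ₜ[k] (1:H)))) * s := by rw [M4, M5]
        _ = antipode (R := k) t * s := by rw [F1 μ e heL hμeL t]
        _ = LinearMap.mul' k H ((TensorProduct.comm k H H)
              ((LinearMap.lTensor H (antipode (R := k))) (s ⊗ₜ[k] t))) := by simp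
    | add X Y hX hY => simp only [mul_add, map_add, hX, hY]
  have hkey : LinearMap.mul' k H ((TensorProduct.comm k H H)
        ((LinearMap.lTensor H (antipode (R := k))) R))
      = LinearMap.mul' k H ((LinearMap.lTensor H (antipode (R := k))) R) := by
    rw [← G2 R, ← G1 R, hR1 e]
  have hu2 : u = LinearMap.mul' k H ((LinearMap.lTensor H (antipode (R := k))) R) := by
    rw [hu, hkey]
  have AH3 : ∀ W : H ⊗[k] H,
      antipode (R := k) (LinearMap.mul' k H ((LinearMap.lTensor H (antipode (R := k))) W))
      = LinearMap.mul' k H ((TensorProduct.comm k H H)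
          ((LinearMap.rTensor H (antipode (R := k))) W)) := by
    intro W
    induction W using TensorProduct.induction_on with
    | zero => simp
    | tmul s t => simp [lemAH μ e heL hμeL, hinv]
    | add X Y hX hY => simp only [map_add, hX, hY]
  rw [hu2, AH3 R, hPI]
  exact hkey
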